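/- Let X ∈ ℝ^{I₁×I₂}, σ > 0, and r = min(I₁, I₂). Then min over Y of (‖X − Y‖_F² + 2σ‖Y‖_*) equals min over A₁ ∈ ℝ^{I₁×r}, A₂ ∈ ℝ^{I₂×r} of (‖X − A₁A₂ᵀ‖_F² + σ(‖A₁‖_F² + ‖A₂‖_F²)). Moreover, if (Â₁, Â₂) solves the right-hand problem, then Ŷ = Â₁Â₂ᵀ solves the left-hand problem. -/

import Mathlib

open Matrix

/-- The nuclear norm of a real matrix: sum of its singular values,
i.e. the square roots of the eigenvalues of `Xᴴ * X`. -/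
noncomputable def nuclearNorm {m n : ℕ} (X : Matrix (Fin m) (Fin n) ℝ) : ℝ :=
  ∑ i, Real.sqrt ((Matrix.isHermitian_conjTranspose_mul_self X).eigenvalues i)

/-- Squared Frobenius norm. -/
def frobSq {m n : ℕ} (X : Matrix (Fin m) (Fin n) ℝ) : ℝ :=
  ∑ i, ∑ j, (X i j) ^ 2

lemma inner_eq_dot {n : ℕ} (x y : EuclideanSpace ℝ (Fin n)) :
    (inner ℝ x y : ℝ) = (x : Fin n → ℝ) ⬝ᵥ (y : Fin n → ℝ) := by
  rw [PiLp.inner_apply]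
  simp [dotProduct, RCLike.inner_apply, mul_comm]

lemma bessel {n : ℕ} {ι : Type*} [Fintype ι] {w : ι → EuclideanSpace ℝ (Fin n)}
    (hw : Orthonormal ℝ w) (x : EuclideanSpace ℝ (Fin n)) :
    ∑ i, ((w i : Fin n → ℝ) ⬝ᵥ (x : Fin n → ℝ)) ^ 2 ≤ (x : Fin n → ℝ) ⬝ᵥ (x : Fin n → ℝ) := by
  have h := hw.sum_inner_products_le (x := x) (s := Finset.univ)
  have hx : ‖x‖ ^ 2 = (x : Fin n → ℝ) ⬝ᵥ (x : Fin n → ℝ) := by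
    rw [← real_inner_self_eq_norm_sq, inner_eq_dot]
  rw [hx] at h
  refine le_trans (le_of_eq ?_) h
  refine Finset.sum_congr rfl fun i _ => ?_
  rw [inner_eq_dot, Real.norm_eq_abs, sq_abs]

lemma dot_le_half {n : ℕ} (x y : Fin n → ℝ) : x ⬝ᵥ y ≤ (x ⬝ᵥ x + y ⬝ᵥ y) / 2 := by
  have h : 0 ≤ ∑ i, (x i - y i) ^ 2 := Finset.sum_nonneg fun i _ => sq_nonneg _
  have e : ∑ i, (x i - y i) ^ 2 = x ⬝ᵥ x + y ⬝ᵥ y - 2 * (x ⬝ᵥ y) := by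
    simp only [dotProduct, Finset.mul_sum, ← Finset.sum_add_distrib, ← Finset.sum_sub_distrib]
    exact Finset.sum_congr rfl fun i _ => by ring
  linarith [e ▸ h]

lemma dot_self_nonneg {n : ℕ} (x : Fin n → ℝ) : 0 ≤ x ⬝ᵥ x :=
  Finset.sum_nonneg fun i _ => mul_self_nonneg _

variable {a b : ℕ} (M : Matrix (Fin a) (Fin b) ℝ)

noncomputable def mu (j : Fin b) : ℝ := (isHermitian_conjTranspose_mul_self M).eigenvalues j
noncomputable def ev (j : Fin b) : EuclideanSpace ℝ (Fin b) :=
  (isHermitian_conjTranspose_mul_self M).eigenvectorBasis j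

lemma ev_orthonormal : Orthonormal ℝ (ev M) :=
  (isHermitian_conjTranspose_mul_self M).eigenvectorBasis.orthonormal

lemma dot_ev (i j : Fin b) :
    (ev M i : Fin b → ℝ) ⬝ᵥ (ev M j : Fin b → ℝ) = if i = j then 1 else 0 := by
  have := (orthonormal_iff_ite.mp (ev_orthonormal M)) i j
  rw [PiLp.inner_apply] at this
  simpa [dotProduct, RCLike.inner_apply, mul_comm] using this

lemma mulvec_ev (j : Fin b) : (Mᴴ * M) *ᵥ (ev M j) = mu M j • (ev M j) :=
  (isHermitian_conjTranspose_mul_self M).mulVec_eigenvectorBasis j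

lemma Mv_dot (i j : Fin b) :
    (M *ᵥ (ev M i)) ⬝ᵥ (M *ᵥ (ev M j)) = if i = j then mu M i else 0 := by
  have h1 : (M *ᵥ (ev M i)) ⬝ᵥ (M *ᵥ (ev M j))
      = (ev M i : Fin b → ℝ) ⬝ᵥ ((Mᴴ * M) *ᵥ (ev M j)) := by
    rw [← mulVec_mulVec, conjTranspose_eq_transpose_of_trivial]
    conv_rhs => rw [dotProduct_mulVec, vecMul_transpose]
  rw [h1, mulvec_ev, dotProduct_smul, dot_ev]
  by_cases h : i = j <;> simp [h, smul_eq_mul, mul_comm]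

lemma Mv_dot_self (j : Fin b) : (M *ᵥ (ev M j)) ⬝ᵥ (M *ᵥ (ev M j)) = mu M j := by
  have := Mv_dot M j j; simpa using this

lemma mu_nonneg (j : Fin b) : 0 ≤ mu M j := by
  rw [← Mv_dot_self M j]; exact dot_self_nonneg _

lemma Mv_zero {j : Fin b} (hj : mu M j = 0) : M *ᵥ (ev M j) = 0 := by
  have h := Mv_dot_self M j
  rw [hj] at h
  funext k
  have := (Finset.sum_eq_zero_iff_of_nonneg
    (fun k _ => mul_self_nonneg ((M *ᵥ (ev M j)) k))).mp h k (Finset.mem_univ k)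
  simpa [mul_self_eq_zero] using this

lemma rows_ev (k l : Fin b) : ∑ i, ev M i k * ev M i l = if k = l then 1 else 0 := by
  classical
  set V : Matrix (Fin b) (Fin b) ℝ := Matrix.of fun x i => ev M i x with hV
  have hVtV : Vᵀ * V = 1 := by
    ext i j
    simp only [Matrix.mul_apply, transpose_apply, one_apply, hV, of_apply]
    simpa [dotProduct] using dot_ev M i j
  have hVVt : V * Vᵀ = 1 := mul_eq_one_comm.mp hVtV
  have := congrFun (congrFun hVVt k) l
  simpa [Matrix.mul_apply, one_apply, hV, of_apply] using this

lemma sqrt_mu_ne {j : Fin b} (hj : mu M j ≠ 0) : Real.sqrt (mu M j) ≠ 0 :=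
  Real.sqrt_ne_zero'.mpr (lt_of_le_of_ne (mu_nonneg M j) (Ne.symm hj))

noncomputable def usv (j : Fin b) : EuclideanSpace ℝ (Fin a) :=
  WithLp.toLp 2 ((Real.sqrt (mu M j))⁻¹ • (M *ᵥ (ev M j) : Fin a → ℝ))

lemma usv_zero {j : Fin b} (hj : mu M j = 0) : usv M j = 0 := by
  simp [usv, Mv_zero M hj]

lemma usv_dot {i j : Fin b} (hi : mu M i ≠ 0) (hj : mu M j ≠ 0) :
    (usv M i : Fin a → ℝ) ⬝ᵥ (usv M j : Fin a → ℝ) = if i = j then 1 else 0 := by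
  have hdot := Mv_dot M i j
  have e : (usv M i : Fin a → ℝ) ⬝ᵥ (usv M j : Fin a → ℝ)
      = (Real.sqrt (mu M i))⁻¹ * ((Real.sqrt (mu M j))⁻¹
          * ((M *ᵥ (ev M i)) ⬝ᵥ (M *ᵥ (ev M j)))) := by
    simp only [usv, WithLp.ofLp_toLp, dotProduct, Finset.mul_sum, PiLp.smul_apply, smul_eq_mul, Pi.smul_apply]
    exact Finset.sum_congr rfl fun k _ => by ring
  rw [e, hdot]
  by_cases h : i = j
  · subst h
    simp only [if_pos rfl]
    have hs := sqrt_mu_ne M hi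
    set s := Real.sqrt (mu M i) with hsdef
    have hss : s * s = mu M i := Real.mul_self_sqrt (mu_nonneg M i)
    rw [← hss]
    field_simp
    simp
  · simp [h]

lemma frobSq_eq_sum_cols {m r : ℕ} (A : Matrix (Fin m) (Fin r) ℝ) :
    frobSq A = ∑ c, (fun k => A k c) ⬝ᵥ (fun k => A k c) := by
  rw [frobSq, Finset.sum_comm]
  simp [dotProduct, sq]

lemma sum_dot_sq_le {n m : ℕ} {ι : Type*} [Fintype ι] {w : ι → EuclideanSpace ℝ (Fin n)}
    (hw : Orthonormal ℝ w) (B : Matrix (Fin n) (Fin m) ℝ) :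
    ∑ i, (Bᵀ *ᵥ (w i : Fin n → ℝ)) ⬝ᵥ (Bᵀ *ᵥ (w i : Fin n → ℝ)) ≤ frobSq B := by
  have e : ∀ i, (Bᵀ *ᵥ (w i : Fin n → ℝ)) ⬝ᵥ (Bᵀ *ᵥ (w i : Fin n → ℝ))
      = ∑ c, ((w i : Fin n → ℝ) ⬝ᵥ (fun k => B k c)) ^ 2 := by
    intro i
    simp only [dotProduct, mulVec, transpose_apply, sq, dotProduct]
    refine Finset.sum_congr rfl fun c _ => ?_
    congr 1 <;> exact Finset.sum_congr rfl fun k _ => mul_comm _ _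
  calc ∑ i, (Bᵀ *ᵥ (w i : Fin n → ℝ)) ⬝ᵥ (Bᵀ *ᵥ (w i : Fin n → ℝ))
      = ∑ c, ∑ i, ((w i : Fin n → ℝ) ⬝ᵥ (fun k => B k c)) ^ 2 := by
        rw [← Finset.sum_comm]; exact Finset.sum_congr rfl fun i _ => e i
    _ ≤ ∑ c, ((fun k => B k c) ⬝ᵥ (fun k => B k c)) :=
        Finset.sum_le_sum fun c _ => bessel hw (WithLp.toLp 2 (fun k => B k c))
    _ = frobSq B := (frobSq_eq_sum_cols B).symm

lemma nuclear_le_half {a b r : ℕ} (A₁ : Matrix (Fin a) (Fin r) ℝ) (A₂ : Matrix (Fin b) (Fin r) ℝ) :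
    2 * nuclearNorm (A₁ * A₂ᵀ) ≤ frobSq A₁ + frobSq A₂ := by
  classical
  set M := A₁ * A₂ᵀ with hM
  have hnuc : nuclearNorm M = ∑ j, Real.sqrt (mu M j) := rfl
  have key : ∀ j, Real.sqrt (mu M j) ≤
      (((A₁ᵀ *ᵥ (usv M j : Fin a → ℝ)) ⬝ᵥ (A₁ᵀ *ᵥ (usv M j : Fin a → ℝ)))
        + ((A₂ᵀ *ᵥ (ev M j : Fin b → ℝ)) ⬝ᵥ (A₂ᵀ *ᵥ (ev M j : Fin b → ℝ)))) / 2 := by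
    intro j
    by_cases hj : mu M j = 0
    · rw [hj, Real.sqrt_zero]
      have h1 := dot_self_nonneg (A₁ᵀ *ᵥ (usv M j : Fin a → ℝ))
      have h2 := dot_self_nonneg (A₂ᵀ *ᵥ (ev M j : Fin b → ℝ))
      linarith
    · have hs := sqrt_mu_ne M hj
      have e1 : (usv M j : Fin a → ℝ) ⬝ᵥ (M *ᵥ (ev M j : Fin b → ℝ)) = Real.sqrt (mu M j) := by
        have hd := Mv_dot_self M j
        have e : (usv M j : Fin a → ℝ) ⬝ᵥ (M *ᵥ (ev M j : Fin b → ℝ))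
            = (Real.sqrt (mu M j))⁻¹ * ((M *ᵥ (ev M j)) ⬝ᵥ (M *ᵥ (ev M j))) := by
          simp only [usv, WithLp.ofLp_toLp, dotProduct, Finset.mul_sum, PiLp.smul_apply, smul_eq_mul, Pi.smul_apply]
          exact Finset.sum_congr rfl fun k _ => by ring
        rw [e, hd]
        set s := Real.sqrt (mu M j) with hsdef
        have hss : s * s = mu M j := Real.mul_self_sqrt (mu_nonneg M j)
        rw [← hss]
        field_simp
      have e2 : (usv M j : Fin a → ℝ) ⬝ᵥ (M *ᵥ (ev M j : Fin b → ℝ))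
          = (A₁ᵀ *ᵥ (usv M j : Fin a → ℝ)) ⬝ᵥ (A₂ᵀ *ᵥ (ev M j : Fin b → ℝ)) := by
        rw [hM, ← mulVec_mulVec, dotProduct_mulVec, ← mulVec_transpose]
      rw [← e1, e2]
      exact dot_le_half _ _
  have b2 : ∑ j, (A₂ᵀ *ᵥ (ev M j : Fin b → ℝ)) ⬝ᵥ (A₂ᵀ *ᵥ (ev M j : Fin b → ℝ)) ≤ frobSq A₂ :=
    sum_dot_sq_le (ev_orthonormal M) A₂
  have b1 : ∑ j, (A₁ᵀ *ᵥ (usv M j : Fin a → ℝ)) ⬝ᵥ (A₁ᵀ *ᵥ (usv M j : Fin a → ℝ)) ≤ frobSq A₁ := by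
    have hw : Orthonormal ℝ (fun i : {j : Fin b // mu M j ≠ 0} => usv M (i : Fin b)) := by
      rw [orthonormal_iff_ite]
      intro i j
      rw [inner_eq_dot, usv_dot M i.2 j.2]
      by_cases h : i = j
      · simp [h]
      · have : (i : Fin b) ≠ (j : Fin b) := fun hc => h (Subtype.ext hc)
        simp [h, this]
    have hsub : ∑ j, (A₁ᵀ *ᵥ (usv M j : Fin a → ℝ)) ⬝ᵥ (A₁ᵀ *ᵥ (usv M j : Fin a → ℝ))
        = ∑ i : {j : Fin b // mu M j ≠ 0},
            (A₁ᵀ *ᵥ (usv M (i : Fin b) : Fin a → ℝ)) ⬝ᵥ (A₁ᵀ *ᵥ (usv M (i : Fin b) : Fin a → ℝ)) := by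
      rw [← Finset.sum_subtype (Finset.univ.filter (fun j => mu M j ≠ 0)) (by simp)
        (fun j => (A₁ᵀ *ᵥ (usv M j : Fin a → ℝ)) ⬝ᵥ (A₁ᵀ *ᵥ (usv M j : Fin a → ℝ)))]
      refine (Finset.sum_filter_of_ne fun j _ hne => ?_).symm
      by_cases hc : mu M j = 0
      · rw [usv_zero M hc] at hne
        simp at hne
      · exact hc
    rw [hsub]
    exact sum_dot_sq_le hw A₁
  have hsum : nuclearNorm M ≤ (frobSq A₁ + frobSq A₂) / 2 := by
    rw [hnuc]
    calc ∑ j, Real.sqrt (mu M j)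
        ≤ ∑ j, (((A₁ᵀ *ᵥ (usv M j : Fin a → ℝ)) ⬝ᵥ (A₁ᵀ *ᵥ (usv M j : Fin a → ℝ)))
          + ((A₂ᵀ *ᵥ (ev M j : Fin b → ℝ)) ⬝ᵥ (A₂ᵀ *ᵥ (ev M j : Fin b → ℝ)))) / 2 :=
          Finset.sum_le_sum fun j _ => key j
      _ = ((∑ j, (A₁ᵀ *ᵥ (usv M j : Fin a → ℝ)) ⬝ᵥ (A₁ᵀ *ᵥ (usv M j : Fin a → ℝ)))
          + (∑ j, (A₂ᵀ *ᵥ (ev M j : Fin b → ℝ)) ⬝ᵥ (A₂ᵀ *ᵥ (ev M j : Fin b → ℝ)))) / 2 := by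
          rw [← Finset.sum_div, Finset.sum_add_distrib]
      _ ≤ (frobSq A₁ + frobSq A₂) / 2 := by linarith
  linarith


lemma sumK {ι : Type*} [Fintype ι] [DecidableEq ι] {r : ℕ} (e : ι ↪ Fin r) (f g : ι → ℝ) :
    ∑ c : Fin r, (∑ i, if e i = c then f i else 0) * (∑ i, if e i = c then g i else 0)
      = ∑ i, f i * g i := by
  classical
  have step : ∀ c : Fin r, (∑ i, if e i = c then f i else 0) * (∑ i, if e i = c then g i else 0)
      = ∑ i, ∑ i', (if e i = c then f i else 0) * (if e i' = c then g i' else 0) :=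
    fun c => Finset.sum_mul_sum _ _ _ _
  rw [Finset.sum_congr rfl fun c _ => step c, Finset.sum_comm]
  refine Finset.sum_congr rfl fun i _ => ?_
  rw [Finset.sum_comm]
  have inner : ∀ i', ∑ c : Fin r, (if e i = c then f i else 0) * (if e i' = c then g i' else 0)
      = if i' = i then f i * g i' else 0 := by
    intro i'
    rw [Finset.sum_eq_single (e i)]
    · by_cases h : i' = i
      · subst h; simp
      · have : e i' ≠ e i := fun hc => h (e.injective hc)
        simp [h, this]
    · intro c _ hc
      simp [Ne.symm hc]
    · simp
  rw [Finset.sum_congr rfl fun i' _ => inner i']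
  simp

lemma exists_factorization {I₁ I₂ : ℕ} (Y : Matrix (Fin I₁) (Fin I₂) ℝ) :
    ∃ (A₁ : Matrix (Fin I₁) (Fin (min I₁ I₂)) ℝ) (A₂ : Matrix (Fin I₂) (Fin (min I₁ I₂)) ℝ),
      A₁ * A₂ᵀ = Y ∧ frobSq A₁ + frobSq A₂ = 2 * nuclearNorm Y := by
  classical
  -- embedding of nonzero eigenvalue indices into Fin (min I₁ I₂)
  have hcard : Fintype.card {j : Fin I₂ // mu Y j ≠ 0} ≤ Fintype.card (Fin (min I₁ I₂)) := by
    have h1 : (Yᴴ * Y).rank = Fintype.card {j : Fin I₂ // mu Y j ≠ 0} :=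
      (isHermitian_conjTranspose_mul_self Y).rank_eq_card_non_zero_eigs
    have h2 : (Yᴴ * Y).rank = Y.rank := rank_conjTranspose_mul_self Y
    have h3 : Y.rank ≤ I₂ := rank_le_width Y
    have h4 : Y.rank ≤ I₁ := rank_le_height Y
    simp only [Fintype.card_fin]
    omega
  obtain ⟨e⟩ := Function.Embedding.nonempty_of_card_le hcard
  set ι := {j : Fin I₂ // mu Y j ≠ 0}
  set s : ι → ℝ := fun i => Real.sqrt (mu Y i) with hs
  have hspos : ∀ i : ι, 0 < s i :=
    fun i => lt_of_le_of_ne (Real.sqrt_nonneg _) (Ne.symm (sqrt_mu_ne Y i.2))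
  set x : ι → Fin I₁ → ℝ := fun i k => (Real.sqrt (s i))⁻¹ * (Y *ᵥ (ev Y i : Fin I₂ → ℝ)) k with hx
  set y : ι → Fin I₂ → ℝ := fun i l => Real.sqrt (s i) * (ev Y i : Fin I₂ → ℝ) l with hy
  refine ⟨Matrix.of fun k c => ∑ i, if e i = c then x i k else 0,
          Matrix.of fun l c => ∑ i, if e i = c then y i l else 0, ?_, ?_⟩
  · ext k l
    rw [Matrix.mul_apply]
    simp only [transpose_apply, of_apply]
    rw [sumK e (fun i => x i k) (fun i => y i l)]
    have e1 : ∀ i : ι, x i k * y i l = (Y *ᵥ (ev Y i : Fin I₂ → ℝ)) k * (ev Y i : Fin I₂ → ℝ) l := by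
      intro i
      have hss : Real.sqrt (s i) ≠ 0 := Real.sqrt_ne_zero'.mpr (hspos i)
      rw [hx, hy]
      field_simp
    rw [Finset.sum_congr rfl fun i _ => e1 i]
    -- extend to all indices
    have e2 : ∑ i : ι, (Y *ᵥ (ev Y i : Fin I₂ → ℝ)) k * (ev Y i : Fin I₂ → ℝ) l
        = ∑ j : Fin I₂, (Y *ᵥ (ev Y j : Fin I₂ → ℝ)) k * (ev Y j : Fin I₂ → ℝ) l := by
      rw [← Finset.sum_subtype (Finset.univ.filter (fun j => mu Y j ≠ 0)) (by simp)
        (fun j => (Y *ᵥ (ev Y j : Fin I₂ → ℝ)) k * (ev Y j : Fin I₂ → ℝ) l)]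
      refine Finset.sum_filter_of_ne fun j _ hne => ?_
      by_cases hc : mu Y j = 0
      · rw [Mv_zero Y hc] at hne
        simp at hne
      · exact hc
    rw [e2]
    have e3 : ∀ j : Fin I₂, (Y *ᵥ (ev Y j : Fin I₂ → ℝ)) k * (ev Y j : Fin I₂ → ℝ) l
        = ∑ m, Y k m * ((ev Y j : Fin I₂ → ℝ) m * (ev Y j : Fin I₂ → ℝ) l) := by
      intro j
      simp only [mulVec, dotProduct, Finset.sum_mul]
      exact Finset.sum_congr rfl fun m _ => by ring
    rw [Finset.sum_congr rfl fun j _ => e3 j, Finset.sum_comm]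
    have e4 : ∀ m, ∑ j : Fin I₂, Y k m * ((ev Y j : Fin I₂ → ℝ) m * (ev Y j : Fin I₂ → ℝ) l)
        = Y k m * if m = l then 1 else 0 := by
      intro m
      rw [← Finset.mul_sum, rows_ev Y m l]
    rw [Finset.sum_congr rfl fun m _ => e4 m]
    simp
  · -- Frobenius norms
    have f1 : frobSq (Matrix.of fun k c => ∑ i, if e i = c then x i k else 0 : Matrix (Fin I₁) (Fin (min I₁ I₂)) ℝ)
        = ∑ i : ι, s i := by
      rw [frobSq]
      simp only [of_apply]
      have : ∀ k, ∑ c, ((∑ i, if e i = c then x i k else 0) : ℝ) ^ 2 = ∑ i : ι, x i k * x i k := by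
        intro k
        simp only [sq]
        exact sumK e (fun i => x i k) (fun i => x i k)
      rw [Finset.sum_congr rfl fun k _ => this k, Finset.sum_comm]
      refine Finset.sum_congr rfl fun i _ => ?_
      have hMv : ∑ k, (Y *ᵥ (ev Y i : Fin I₂ → ℝ)) k * (Y *ᵥ (ev Y i : Fin I₂ → ℝ)) k = mu Y i :=
        Mv_dot_self Y i
      have hss : Real.sqrt (s i) ≠ 0 := Real.sqrt_ne_zero'.mpr (hspos i)
      have e5 : ∑ k, x i k * x i k
          = (Real.sqrt (s i))⁻¹ * ((Real.sqrt (s i))⁻¹ * mu Y i) := by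
        rw [← hMv, Finset.mul_sum]
        simp only [hx, Finset.mul_sum]
        exact Finset.sum_congr rfl fun k _ => by ring
      rw [e5]
      have h1 : Real.sqrt (s i) * Real.sqrt (s i) = s i := Real.mul_self_sqrt (hspos i).le
      have h2 : s i * s i = mu Y i := Real.mul_self_sqrt (mu_nonneg Y i)
      rw [← h2, ← h1]
      field_simp
      rw [Real.sqrt_sq (Real.sqrt_nonneg _)]
    have f2 : frobSq (Matrix.of fun l c => ∑ i, if e i = c then y i l else 0 : Matrix (Fin I₂) (Fin (min I₁ I₂)) ℝ)
        = ∑ i : ι, s i := by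
      rw [frobSq]
      simp only [of_apply]
      have : ∀ l, ∑ c, ((∑ i, if e i = c then y i l else 0) : ℝ) ^ 2 = ∑ i : ι, y i l * y i l := by
        intro l
        simp only [sq]
        exact sumK e (fun i => y i l) (fun i => y i l)
      rw [Finset.sum_congr rfl fun l _ => this l, Finset.sum_comm]
      refine Finset.sum_congr rfl fun i _ => ?_
      have hvv : ∑ l, (ev Y i : Fin I₂ → ℝ) l * (ev Y i : Fin I₂ → ℝ) l = 1 := by
        have := dot_ev Y i i
        simpa [dotProduct] using this
      have e5 : ∑ l, y i l * y i l
          = Real.sqrt (s i) * Real.sqrt (s i) * ∑ l, (ev Y i : Fin I₂ → ℝ) l * (ev Y i : Fin I₂ → ℝ) l := by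
        rw [Finset.mul_sum]
        simp only [hy]
        exact Finset.sum_congr rfl fun l _ => by ring
      rw [e5, hvv, Real.mul_self_sqrt (hspos i).le, mul_one]
    rw [f1, f2]
    have : nuclearNorm Y = ∑ j, Real.sqrt (mu Y j) := rfl
    rw [this]
    have e6 : ∑ j : Fin I₂, Real.sqrt (mu Y j) = ∑ i : ι, s i := by
      rw [← Finset.sum_subtype (Finset.univ.filter (fun j => mu Y j ≠ 0)) (by simp)
        (fun j => Real.sqrt (mu Y j))]
      refine (Finset.sum_filter_of_ne fun j _ hne => ?_).symm
      by_cases hc : mu Y j = 0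
      · rw [hc] at hne; simp at hne
      · exact hc
    rw [e6]
    ring

lemma frobSq_nonneg {m n : ℕ} (A : Matrix (Fin m) (Fin n) ℝ) : 0 ≤ frobSq A :=
  Finset.sum_nonneg fun i _ => Finset.sum_nonneg fun j _ => sq_nonneg _

lemma nuclearNorm_nonneg {m n : ℕ} (A : Matrix (Fin m) (Fin n) ℝ) : 0 ≤ nuclearNorm A :=
  Finset.sum_nonneg fun i _ => Real.sqrt_nonneg _

theorem stmt5 {I₁ I₂ : ℕ} (X : Matrix (Fin I₁) (Fin I₂) ℝ) (σ : ℝ) (hσ : 0 < σ) :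
    sInf {v : ℝ | ∃ Y : Matrix (Fin I₁) (Fin I₂) ℝ,
        v = frobSq (X - Y) + 2 * σ * nuclearNorm Y} =
      sInf {v : ℝ | ∃ (A₁ : Matrix (Fin I₁) (Fin (min I₁ I₂)) ℝ)
          (A₂ : Matrix (Fin I₂) (Fin (min I₁ I₂)) ℝ),
          v = frobSq (X - A₁ * A₂ᵀ) + σ * (frobSq A₁ + frobSq A₂)} ∧
    ∀ (Ah₁ : Matrix (Fin I₁) (Fin (min I₁ I₂)) ℝ) (Ah₂ : Matrix (Fin I₂) (Fin (min I₁ I₂)) ℝ),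
      (∀ (A₁ : Matrix (Fin I₁) (Fin (min I₁ I₂)) ℝ) (A₂ : Matrix (Fin I₂) (Fin (min I₁ I₂)) ℝ),
        frobSq (X - Ah₁ * Ah₂ᵀ) + σ * (frobSq Ah₁ + frobSq Ah₂) ≤
          frobSq (X - A₁ * A₂ᵀ) + σ * (frobSq A₁ + frobSq A₂)) →
      ∀ Y : Matrix (Fin I₁) (Fin I₂) ℝ,
        frobSq (X - Ah₁ * Ah₂ᵀ) + 2 * σ * nuclearNorm (Ah₁ * Ah₂ᵀ) ≤
          frobSq (X - Y) + 2 * σ * nuclearNorm Y := by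
  have bdd1 : BddBelow {v : ℝ | ∃ Y : Matrix (Fin I₁) (Fin I₂) ℝ,
      v = frobSq (X - Y) + 2 * σ * nuclearNorm Y} := by
    refine ⟨0, ?_⟩
    rintro v ⟨Y, rfl⟩
    have h1 := frobSq_nonneg (X - Y)
    have h2 := nuclearNorm_nonneg Y
    nlinarith
  constructor
  · apply le_antisymm
    · refine le_csInf ⟨_, 0, 0, rfl⟩ ?_
      rintro w ⟨A₁, A₂, rfl⟩
      have hnl := nuclear_le_half A₁ A₂
      have hle : frobSq (X - A₁ * A₂ᵀ) + 2 * σ * nuclearNorm (A₁ * A₂ᵀ) ≤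
          frobSq (X - A₁ * A₂ᵀ) + σ * (frobSq A₁ + frobSq A₂) := by nlinarith
      exact le_trans (csInf_le bdd1 ⟨A₁ * A₂ᵀ, rfl⟩) hle
    · refine csInf_le_csInf ?_ ⟨_, 0, rfl⟩ ?_
      · refine ⟨0, ?_⟩
        rintro v ⟨A₁, A₂, rfl⟩
        have h1 := frobSq_nonneg (X - A₁ * A₂ᵀ)
        have h2 := frobSq_nonneg A₁
        have h3 := frobSq_nonneg A₂
        nlinarith
      · rintro v ⟨Y, rfl⟩
        obtain ⟨A₁, A₂, hfac, hnorm⟩ := exists_factorization Y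
        refine ⟨A₁, A₂, ?_⟩
        rw [hfac, hnorm]
        ring
  · intro Ah₁ Ah₂ hmin Y
    obtain ⟨A₁, A₂, hfac, hnorm⟩ := exists_factorization Y
    have h1 := nuclear_le_half Ah₁ Ah₂
    have h2 := hmin A₁ A₂
    rw [hfac] at h2
    have h3 : 2 * σ * nuclearNorm (Ah₁ * Ah₂ᵀ) ≤ σ * (frobSq Ah₁ + frobSq Ah₂) := by nlinarith
    have h4 : σ * (frobSq A₁ + frobSq A₂) = 2 * σ * nuclearNorm Y := by rw [hnorm]; ring
    linarith
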